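/- Let $k \geq 2$ and let $A_1, \dots, A_k \subseteq \mathbb{R}^2$ be finite non-empty sets, and let $l$ be a line in $\mathbb{R}^2$. For each $i$, let $r_i$ be the minimal number of translates of $l$ required to cover $A_i$. Then $|A_1 + \dots + A_k| \geq \left(\frac{|A_1|}{r_1} + \dots + \frac{|A_k|}{r_k} - (k-1)\right)\left(r_1 + \dots + r_k - (k-1)\right)$. -/

import Mathlib

open scoped Pointwise
open Finset

private theorem memFinsetSumGS {ι α : Type*} [DecidableEq α] [AddCommMonoid α] (s : Finset ι)
    (F : ι → Finset α) (z : α) :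
    z ∈ ∑ i ∈ s, F i ↔ ∃ g : ι → α, (∀ i ∈ s, g i ∈ F i) ∧ z = ∑ i ∈ s, g i := by
  classical
  induction s using Finset.cons_induction generalizing z with
  | empty => simp [Finset.mem_zero, eq_comm]
  | cons a s ha ih =>
    rw [Finset.sum_cons, Finset.mem_add]
    constructor
    · rintro ⟨y, hy, v, hv, rfl⟩
      obtain ⟨g, hg, rfl⟩ := (ih v).1 hv
      refine ⟨Function.update g a y, ?_, ?_⟩
      · intro i hi
        rcases Finset.mem_cons.1 hi with rfl | hi
        · simpa using hy
        · rw [Function.update_of_ne (ne_of_mem_of_not_mem hi ha)]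
          exact hg i hi
      · rw [Finset.sum_cons, Function.update_self]
        congr 1
        exact (Finset.sum_congr rfl fun i hi =>
          (Function.update_of_ne (ne_of_mem_of_not_mem hi ha) _ _).symm)
    · rintro ⟨g, hg, rfl⟩
      exact ⟨g a, hg a (Finset.mem_cons_self _ _), ∑ i ∈ s, g i,
        (ih _).2 ⟨g, fun i hi => hg i (Finset.mem_cons_of_mem hi), rfl⟩,
        (Finset.sum_cons ha).symm⟩

private theorem finsetSumSubsetGS {ι α : Type*} [DecidableEq α] [AddCommMonoid α] (s : Finset ι)
    (F G : ι → Finset α) (h : ∀ i ∈ s, F i ⊆ G i) :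
    (∑ i ∈ s, F i) ⊆ ∑ i ∈ s, G i := by
  intro z hz
  obtain ⟨g, hg, rfl⟩ := (memFinsetSumGS s F z).1 hz
  exact (memFinsetSumGS s G _).2 ⟨g, fun i hi => h i hi (hg i hi), rfl⟩

private theorem finsetSumNonemptyGS {ι α : Type*} [DecidableEq α] [AddCommMonoid α] (s : Finset ι)
    (F : ι → Finset α) (h : ∀ i ∈ s, (F i).Nonempty) :
    (∑ i ∈ s, F i).Nonempty := by
  classical
  refine ⟨∑ i ∈ s, if hi : i ∈ s then (h i hi).choose else 0, ?_⟩
  refine (memFinsetSumGS s F _).2 ⟨_, fun i hi => ?_, rfl⟩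
  simp only [dif_pos hi]
  exact (h i hi).choose_spec

private theorem imageFinsetSumGS {ι α β : Type*} [DecidableEq α] [DecidableEq β]
    [AddCommMonoid α] [AddCommMonoid β] (s : Finset ι) (F : ι → Finset α) (f : α →+ β) :
    (∑ i ∈ s, F i).image f = ∑ i ∈ s, (F i).image f := by
  classical
  induction s using Finset.cons_induction with
  | empty =>
    ext z
    simp [Finset.mem_zero, eq_comm]
  | cons a s ha ih => rw [Finset.sum_cons, Finset.sum_cons, Finset.image_add, ih]

private theorem oneDRGS : ∀ (m : ℕ) (D : Fin (m + 1) → Finset ℝ), (∀ i, (D i).Nonempty) →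
    ∑ i, (D i).card ≤ (∑ i, D i).card + m := by
  intro m
  induction m with
  | zero =>
    intro D h
    simp
  | succ m ih =>
    intro D h
    rw [Fin.sum_univ_succ (f := fun i => (D i).card), Fin.sum_univ_succ (f := fun i => D i)]
    have hS : (∑ i : Fin (m + 1), D i.succ).Nonempty :=
      finsetSumNonemptyGS _ _ fun i _ => h i.succ
    have h1 := cauchy_davenport_add_of_linearOrder_isCancelAdd (h 0) hS
    have h2 : ∑ i : Fin (m + 1), (D i.succ).card ≤ (∑ i : Fin (m + 1), D i.succ).card + m :=
      ih (fun i => D i.succ) (fun i => h i.succ)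
    omega

private theorem oneDGS (m : ℕ) (C : Fin (m + 1) → Finset (ℝ × ℝ)) (x : Fin (m + 1) → ℝ)
    (hC : ∀ i, ∀ p ∈ C i, p.1 = x i) (hne : ∀ i, (C i).Nonempty) :
    ∑ i, (C i).card ≤ (∑ i, C i).card + m := by
  classical
  have hc : ∀ i, ((C i).image Prod.snd).card = (C i).card := fun i =>
    Finset.card_image_of_injOn fun p hp q hq hpq =>
      Prod.ext (by rw [hC i p hp, hC i q hq]) hpq
  have himg : (∑ i, C i).image (Prod.snd) = ∑ i, (C i).image Prod.snd := by
    have := imageFinsetSumGS (Finset.univ) C (AddMonoidHom.snd ℝ ℝ)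
    simpa using this
  calc ∑ i, (C i).card = ∑ i, ((C i).image Prod.snd).card := by simp [hc]
    _ ≤ (∑ i, (C i).image Prod.snd).card + m :=
        oneDRGS m _ fun i => ((hne i).image _)
    _ = ((∑ i, C i).image Prod.snd).card + m := by rw [himg]
    _ ≤ (∑ i, C i).card + m := by
        exact Nat.add_le_add_right (Finset.card_image_le) m

private theorem sumUpdateGS {ι κ γ : Type*} [Fintype ι] [DecidableEq ι] [AddCommMonoid γ]
    (B : ι → κ) (i0 : ι) (B' : κ) (F : κ → γ) :
    ∑ i, F (Function.update B i0 B' i) = F B' + ∑ i ∈ Finset.univ.erase i0, F (B i) := by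
  rw [← Finset.add_sum_erase _ (fun i => F (Function.update B i0 B' i)) (Finset.mem_univ i0)]
  congr 1
  · rw [Function.update_self]
  · exact Finset.sum_congr rfl fun i hi => by
      rw [Function.update_of_ne (Finset.ne_of_mem_erase hi)]
private theorem geomGS (m : ℕ) (B : Fin (m + 1) → Finset (ℝ × ℝ)) (M : Fin (m + 1) → ℝ)
    (T : Fin (m + 1) → Finset (ℝ × ℝ)) (B'' : Fin (m + 1) → Finset (ℝ × ℝ)) (i0 : Fin (m + 1))
    (hT : ∀ i, T i ⊆ B i) (hTfst : ∀ i, ∀ p ∈ T i, p.1 = M i) (hTne : ∀ i, (T i).Nonempty)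
    (hBfst : ∀ i, ∀ p ∈ B i, p.1 ≤ M i)
    (hB'' : ∀ i, B'' i ⊆ B i) (hB''i0 : ∀ p ∈ B'' i0, p.1 < M i0) :
    (∑ i, B'' i).card + ∑ i, (T i).card ≤ (∑ i, B i).card + m := by
  classical
  have hsub : (∑ i, B'' i) ∪ (∑ i, T i) ⊆ ∑ i, B i :=
    Finset.union_subset (finsetSumSubsetGS _ _ _ fun i _ => hB'' i)
      (finsetSumSubsetGS _ _ _ fun i _ => hT i)
  have hdisj : Disjoint (∑ i, B'' i) (∑ i, T i) := by
    rw [Finset.disjoint_left]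
    rintro z hz hzT
    obtain ⟨g, hg, rfl⟩ := (memFinsetSumGS _ _ _).1 hz
    obtain ⟨t, ht, heq⟩ := (memFinsetSumGS _ _ _).1 hzT
    have h1 : ∑ i, (g i).1 < ∑ i, M i :=
      Finset.sum_lt_sum (fun i _ => hBfst i _ (hB'' i (hg i (Finset.mem_univ i))))
        ⟨i0, Finset.mem_univ _, hB''i0 _ (hg i0 (Finset.mem_univ i0))⟩
    have h2 : ∑ i, (t i).1 = ∑ i, M i :=
      Finset.sum_congr rfl fun i _ => hTfst i _ (ht i (Finset.mem_univ i))
    have h3 : (∑ i, g i).1 = ∑ i, (g i).1 := Prod.fst_sum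
    have h4 : (∑ i, t i).1 = ∑ i, (t i).1 := Prod.fst_sum
    have h5 : ∑ i, (g i).1 = ∑ i, (t i).1 := by rw [← h3, ← h4, heq]
    linarith
  have h6 : (∑ i, B'' i).card + (∑ i, T i).card ≤ (∑ i, B i).card := by
    rw [← Finset.card_union_of_disjoint hdisj]
    exact Finset.card_le_card hsub
  have h7 := oneDGS m T M hTfst hTne
  omega
set_option maxHeartbeats 2000000 in
private theorem coreGS (m : ℕ) : ∀ N : ℕ, ∀ B : Fin (m + 1) → Finset (ℝ × ℝ),
    (∀ i, (B i).Nonempty) → (∑ i, ((B i).image Prod.fst).card = N) →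
    ((∑ i, ((B i).card : ℝ) / (((B i).image Prod.fst).card : ℝ)) - (m : ℝ)) *
      ((∑ i, ((((B i).image Prod.fst).card : ℕ) : ℝ)) - (m : ℝ)) ≤ ((∑ i, B i).card : ℝ) := by
  intro N
  induction N using Nat.strong_induction_on with
  | _ N IH =>
  intro B hne hN
  classical
  have hρ1 : ∀ i, 1 ≤ ((B i).image Prod.fst).card := fun i =>
    Finset.card_pos.2 ((hne i).image _)
  by_cases hall : ∀ i, ((B i).image Prod.fst).card = 1
  · -- base case: every B i lies in a single vertical fiber
    choose x hx using fun i => Finset.card_eq_one.1 (hall i)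
    have hfst : ∀ i, ∀ p ∈ B i, p.1 = x i := by
      intro i p hp
      have h1 : p.1 ∈ (B i).image Prod.fst := Finset.mem_image_of_mem _ hp
      rw [hx i, Finset.mem_singleton] at h1
      exact h1
    have h1 := oneDGS m B x hfst hne
    have h2 : (∑ i, ((B i).card : ℝ)) ≤ ((∑ i, B i).card : ℝ) + m := by
      exact_mod_cast h1
    simp only [hall, Nat.cast_one, div_one, Finset.sum_const, Finset.card_univ,
      Fintype.card_fin, nsmul_eq_mul, mul_one]
    push_cast
    nlinarith [h2]
  · -- inductive case
    push_neg at hall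
    obtain ⟨i1, hi1⟩ := hall
    have hi1' : 2 ≤ ((B i1).image Prod.fst).card := by have := hρ1 i1; omega
    set M : Fin (m + 1) → ℝ := fun i => ((B i).image Prod.fst).max' ((hne i).image _) with hM
    set T : Fin (m + 1) → Finset (ℝ × ℝ) := fun i => (B i).filter (fun p => p.1 = M i) with hT
    have hTsub : ∀ i, T i ⊆ B i := by
      intro i; simp only [hT]; exact Finset.filter_subset _ _
    have hTne : ∀ i, (T i).Nonempty := by
      intro i
      obtain ⟨p, hp, hp1⟩ := Finset.mem_image.1 (((B i).image Prod.fst).max'_mem ((hne i).image _))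
      exact ⟨p, by simp only [hT, Finset.mem_filter, hM]; exact ⟨hp, hp1⟩⟩
    have hTfst : ∀ i, ∀ p ∈ T i, p.1 = M i := by
      intro i p hp
      simp only [hT, Finset.mem_filter] at hp
      exact hp.2
    have hd0 : ∀ i, ((B i).image Prod.fst).card = 1 →
        ((T i).card : ℝ) - ((B i).card : ℝ) / (((B i).image Prod.fst).card : ℝ) = 0 := by
      intro i h1'
      have hTB : T i = B i := by
        simp only [hT]
        apply Finset.filter_true_of_mem
        intro p hp
        obtain ⟨v, hv⟩ := Finset.card_eq_one.1 h1'
        have h2 : p.1 ∈ (B i).image Prod.fst := Finset.mem_image_of_mem _ hp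
        have h3 : M i ∈ (B i).image Prod.fst := by
          simp only [hM]; exact Finset.max'_mem _ _
        rw [hv, Finset.mem_singleton] at h2 h3
        rw [h2, h3]
      rw [hTB, h1']
      simp
    -- choice of i0
    have hex : ∃ i0, 2 ≤ ((B i0).image Prod.fst).card ∧
        ((∑ i, ((((B i).image Prod.fst).card : ℕ) : ℝ)) - ((m : ℝ) + 1)) *
            (((T i0).card : ℝ) - ((B i0).card : ℝ) / (((B i0).image Prod.fst).card : ℝ)) ≤
          (∑ i, (((T i).card : ℝ) - ((B i).card : ℝ) / (((B i).image Prod.fst).card : ℝ))) *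
            ((((B i0).image Prod.fst).card : ℝ) - 1) := by
      by_contra hc
      push_neg at hc
      set P := Finset.univ.filter (fun i : Fin (m + 1) => 2 ≤ ((B i).image Prod.fst).card)
        with hP
      have hPne : P.Nonempty := ⟨i1, by simp [hP, hi1']⟩
      have hPle := Finset.sum_lt_sum_of_nonempty hPne
        (f := fun i0 => (∑ i, (((T i).card : ℝ) - ((B i).card : ℝ) /
            (((B i).image Prod.fst).card : ℝ))) * ((((B i0).image Prod.fst).card : ℝ) - 1))
        (g := fun i0 => ((∑ i, ((((B i).image Prod.fst).card : ℕ) : ℝ)) - ((m : ℝ) + 1)) *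
            (((T i0).card : ℝ) - ((B i0).card : ℝ) / (((B i0).image Prod.fst).card : ℝ)))
        (fun i hi => hc i (by simpa [hP] using (Finset.mem_filter.1 hi).2))
      have hL : ∑ i0 ∈ P, (∑ i, (((T i).card : ℝ) - ((B i).card : ℝ) /
            (((B i).image Prod.fst).card : ℝ))) * ((((B i0).image Prod.fst).card : ℝ) - 1)
          = (∑ i, (((T i).card : ℝ) - ((B i).card : ℝ) / (((B i).image Prod.fst).card : ℝ))) *
            ((∑ i, ((((B i).image Prod.fst).card : ℕ) : ℝ)) - ((m : ℝ) + 1)) := by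
        rw [← Finset.mul_sum]
        congr 1
        have e1 : ∑ i0 ∈ P, ((((B i0).image Prod.fst).card : ℝ) - 1)
            = ∑ i0, ((((B i0).image Prod.fst).card : ℝ) - 1) := by
          apply Finset.sum_subset (Finset.filter_subset _ _)
          intro i _ hiP
          have h2 : ¬ 2 ≤ ((B i).image Prod.fst).card := by simpa [hP] using hiP
          have h3 : ((B i).image Prod.fst).card = 1 := by have := hρ1 i; omega
          simp [h3]
        rw [e1, Finset.sum_sub_distrib]
        simp [Finset.card_univ]
      have hR : ∑ i0 ∈ P, ((∑ i, ((((B i).image Prod.fst).card : ℕ) : ℝ)) - ((m : ℝ) + 1)) *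
            (((T i0).card : ℝ) - ((B i0).card : ℝ) / (((B i0).image Prod.fst).card : ℝ))
          = ((∑ i, ((((B i).image Prod.fst).card : ℕ) : ℝ)) - ((m : ℝ) + 1)) *
            (∑ i, (((T i).card : ℝ) - ((B i).card : ℝ) / (((B i).image Prod.fst).card : ℝ))) := by
        rw [← Finset.mul_sum]
        congr 1
        apply Finset.sum_subset (Finset.filter_subset _ _)
        intro i _ hiP
        have h2 : ¬ 2 ≤ ((B i).image Prod.fst).card := by simpa [hP] using hiP
        have h3 : ((B i).image Prod.fst).card = 1 := by have := hρ1 i; omega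
        exact hd0 i h3
      rw [hL, hR, mul_comm] at hPle
      exact lt_irrefl _ hPle
    obtain ⟨i0, hρ2, hkey⟩ := hex
    -- split off the top fiber of B i0
    have hρpos : (0 : ℝ) < (((B i0).image Prod.fst).card : ℝ) - 1 := by
      have h2 : (2 : ℝ) ≤ (((B i0).image Prod.fst).card : ℝ) := by exact_mod_cast hρ2
      linarith
    have hρ0pos : (0 : ℝ) < (((B i0).image Prod.fst).card : ℝ) := by linarith
    set B' := (B i0).filter (fun p => ¬ p.1 = M i0) with hB'def
    have hB'sub : B' ⊆ B i0 := Finset.filter_subset _ _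
    have hsplit : (T i0).card + B'.card = (B i0).card := by
      simp only [hT, hB'def]
      exact Finset.card_filter_add_card_filter_not _
    have himg' : B'.image Prod.fst = ((B i0).image Prod.fst).erase (M i0) := by
      ext v
      simp only [hB'def, Finset.mem_image, Finset.mem_filter, Finset.mem_erase]
      constructor
      · rintro ⟨p, ⟨hp, hpne⟩, rfl⟩
        exact ⟨hpne, p, hp, rfl⟩
      · rintro ⟨hne', p, hp, rfl⟩
        exact ⟨p, ⟨hp, hne'⟩, rfl⟩
    have hρ' : (B'.image Prod.fst).card = ((B i0).image Prod.fst).card - 1 := by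
      rw [himg']
      apply Finset.card_erase_of_mem
      simp only [hM]
      exact Finset.max'_mem _ _
    have hB'ne : B'.Nonempty := by
      have hvx : ∃ v ∈ (B i0).image Prod.fst, v ≠ M i0 := by
        by_contra hcon
        push_neg at hcon
        have hsub2 : (B i0).image Prod.fst ⊆ {M i0} := fun v hv =>
          Finset.mem_singleton.2 (hcon v hv)
        have := Finset.card_le_card hsub2
        simp only [Finset.card_singleton] at this
        omega
      obtain ⟨v, hv, hvne⟩ := hvx
      obtain ⟨p, hp, rfl⟩ := Finset.mem_image.1 hv
      exact ⟨p, by simp only [hB'def, Finset.mem_filter]; exact ⟨hp, hvne⟩⟩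
    -- the updated family
    have hupd : ∀ i, Function.update B i0 B' i ⊆ B i := by
      intro i
      by_cases h : i = i0
      · subst h; rw [Function.update_self]; exact hB'sub
      · rw [Function.update_of_ne h]
    have hupdne : ∀ i, (Function.update B i0 B' i).Nonempty := by
      intro i
      by_cases h : i = i0
      · subst h; rw [Function.update_self]; exact hB'ne
      · rw [Function.update_of_ne h]; exact hne i
    have hmeas : (∑ i, ((Function.update B i0 B' i).image Prod.fst).card) + 1 = N := by
      rw [sumUpdateGS B i0 B' (fun s => (s.image Prod.fst).card), hρ', ← hN,
        ← Finset.add_sum_erase _ (fun i => ((B i).image Prod.fst).card) (Finset.mem_univ i0)]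
      have := hρ1 i0
      omega
    have hIH := IH (∑ i, ((Function.update B i0 B' i).image Prod.fst).card) (by omega)
      (Function.update B i0 B') hupdne rfl
    -- geometric estimate
    have hBfst : ∀ i, ∀ p ∈ B i, p.1 ≤ M i := by
      intro i p hp
      simp only [hM]
      exact Finset.le_max' _ _ (Finset.mem_image_of_mem _ hp)
    have hgeom := geomGS m B M T (Function.update B i0 B') i0 hTsub hTfst hTne hBfst hupd
      (by
        rw [Function.update_self]
        intro p hp
        have h1 : p.1 ≠ M i0 := by
          simp only [hB'def, Finset.mem_filter] at hp
          exact hp.2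
        exact lt_of_le_of_ne (hBfst i0 p (hB'sub hp)) h1)
    have hgeomR : ((∑ i, Function.update B i0 B' i).card : ℝ) + (∑ i, ((T i).card : ℝ))
        ≤ ((∑ i, B i).card : ℝ) + m := by exact_mod_cast hgeom
    -- real identities
    have hcastρ : ((((B i0).image Prod.fst).card - 1 : ℕ) : ℝ)
        = (((B i0).image Prod.fst).card : ℝ) - 1 := by
      have := hρ1 i0
      push_cast [Nat.cast_sub this]
      ring
    have hcastc : (B'.card : ℝ) = ((B i0).card : ℝ) - ((T i0).card : ℝ) := by
      have h9 : ((T i0).card : ℝ) + (B'.card : ℝ) = ((B i0).card : ℝ) := by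
        exact_mod_cast hsplit
      linarith
    have hEc : (∑ i, ((B i).card : ℝ) / (((B i).image Prod.fst).card : ℝ))
        = ((B i0).card : ℝ) / (((B i0).image Prod.fst).card : ℝ)
          + ∑ i ∈ Finset.univ.erase i0, ((B i).card : ℝ) / (((B i).image Prod.fst).card : ℝ) :=
      (Finset.add_sum_erase _ _ (Finset.mem_univ i0)).symm
    have hEρ : (∑ i, ((((B i).image Prod.fst).card : ℕ) : ℝ))
        = (((B i0).image Prod.fst).card : ℝ)
          + ∑ i ∈ Finset.univ.erase i0, ((((B i).image Prod.fst).card : ℕ) : ℝ) :=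
      (Finset.add_sum_erase _ _ (Finset.mem_univ i0)).symm
    have hcB'' : (∑ i, ((Function.update B i0 B' i).card : ℝ) /
          (((Function.update B i0 B' i).image Prod.fst).card : ℝ))
        = (((B i0).card : ℝ) - ((T i0).card : ℝ)) / ((((B i0).image Prod.fst).card : ℝ) - 1)
          + ∑ i ∈ Finset.univ.erase i0, ((B i).card : ℝ) / (((B i).image Prod.fst).card : ℝ) := by
      rw [sumUpdateGS B i0 B'
        (fun s => ((s.card : ℝ) / ((s.image Prod.fst).card : ℝ)))]
      rw [hρ', hcastρ, hcastc]
    have hρB'' : (∑ i, ((((Function.update B i0 B' i).image Prod.fst).card : ℕ) : ℝ))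
        = ((((B i0).image Prod.fst).card : ℝ) - 1)
          + ∑ i ∈ Finset.univ.erase i0, ((((B i).image Prod.fst).card : ℕ) : ℝ) := by
      rw [sumUpdateGS B i0 B' (fun s => (((s.image Prod.fst).card : ℕ) : ℝ))]
      rw [hρ', hcastρ]
    rw [hcB'', hρB''] at hIH
    rw [hEρ] at hkey
    have hSd : (∑ i, (((T i).card : ℝ) - ((B i).card : ℝ) / (((B i).image Prod.fst).card : ℝ)))
        = (∑ i, ((T i).card : ℝ))
          - (∑ i, ((B i).card : ℝ) / (((B i).image Prod.fst).card : ℝ)) :=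
      Finset.sum_sub_distrib _ _
    rw [hSd, hEc] at hkey
    -- final algebra
    rw [hEc, hEρ]
    have hρne : (((B i0).image Prod.fst).card : ℝ) ≠ 0 := ne_of_gt hρ0pos
    have hρ1ne : (((B i0).image Prod.fst).card : ℝ) - 1 ≠ 0 := ne_of_gt hρpos
    have e1 : ((B i0).card : ℝ) / (((B i0).image Prod.fst).card : ℝ)
        * (((B i0).image Prod.fst).card : ℝ) = ((B i0).card : ℝ) :=
      div_mul_cancel₀ _ hρne
    have e2 : (((B i0).card : ℝ) - ((T i0).card : ℝ)) / ((((B i0).image Prod.fst).card : ℝ) - 1)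
        * ((((B i0).image Prod.fst).card : ℝ) - 1) = ((B i0).card : ℝ) - ((T i0).card : ℝ) :=
      div_mul_cancel₀ _ hρ1ne
    have hx : (((B i0).card : ℝ) / (((B i0).image Prod.fst).card : ℝ)
          - (((B i0).card : ℝ) - ((T i0).card : ℝ)) /
              ((((B i0).image Prod.fst).card : ℝ) - 1))
        * ((((B i0).image Prod.fst).card : ℝ) - 1)
        = ((T i0).card : ℝ) - ((B i0).card : ℝ) / (((B i0).image Prod.fst).card : ℝ) := by
      linear_combination e1 - e2
    rw [← hx] at hkey
    set u := ((B i0).card : ℝ) / (((B i0).image Prod.fst).card : ℝ) with hudef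
    set v := (((B i0).card : ℝ) - ((T i0).card : ℝ)) /
        ((((B i0).image Prod.fst).card : ℝ) - 1) with hvdef
    set ρR := (((B i0).image Prod.fst).card : ℝ) with hρRdef
    set Ec := ∑ i ∈ Finset.univ.erase i0,
        ((B i).card : ℝ) / (((B i).image Prod.fst).card : ℝ) with hEcdef
    set Eρ := ∑ i ∈ Finset.univ.erase i0,
        ((((B i).image Prod.fst).card : ℕ) : ℝ) with hEρdef
    set Sf := ∑ i, ((T i).card : ℝ) with hSfdef
    set cB := ((∑ i, B i).card : ℝ) with hcBdef
    set cB'' := ((∑ i, Function.update B i0 B' i).card : ℝ) with hcB2def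
    have hstep : (u - v) * ((ρR + Eρ) - ((m : ℝ) + 1)) ≤ Sf - (u + Ec) := by
      nlinarith [hkey, hρpos]
    nlinarith [hIH, hstep, hgeomR]
set_option maxHeartbeats 1000000 in
/-- k-fold Grynkiewicz–Serra inequality: if `r i` is the minimal number of translates
of the line `l` needed to cover `A i`, then
`|A₁ + ⋯ + A_k| ≥ (|A₁|/r₁ + ⋯ + |A_k|/r_k - (k-1)) (r₁ + ⋯ + r_k - (k-1))`. -/
theorem stmt_7 (k : ℕ) (hk : 2 ≤ k) (A : Fin k → Finset (Fin 2 → ℝ))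
    (hA : ∀ i, (A i).Nonempty)
    (l : Set (Fin 2 → ℝ))
    (hl : ∃ a w : Fin 2 → ℝ, w ≠ 0 ∧ l = {x | ∃ t : ℝ, x = a + t • w})
    (r : Fin k → ℕ)
    (hr : ∀ i, IsLeast {n : ℕ | ∃ c : Fin n → (Fin 2 → ℝ),
      (A i : Set (Fin 2 → ℝ)) ⊆ ⋃ j, (c j +ᵥ l)} (r i)) :
    ((∑ i, ((A i).card : ℝ) / (r i)) - ((k : ℝ) - 1)) *
      ((∑ i, (r i : ℝ)) - ((k : ℝ) - 1)) ≤ ((∑ i, A i).card : ℝ) := by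
  classical
  obtain ⟨a, w, hw0, rfl⟩ := hl
  obtain ⟨m, rfl⟩ : ∃ m, k = m + 1 := ⟨k - 1, by omega⟩
  set φ : (Fin 2 → ℝ) → ℝ := fun x => x 0 * w 1 - x 1 * w 0 with hφ
  have hw2 : 0 < w 0 ^ 2 + w 1 ^ 2 := by
    by_cases h : w 0 = 0
    · have h1 : w 1 ≠ 0 := by
        intro h1; exact hw0 (funext fun j => by fin_cases j <;> simp [h, h1])
      nlinarith [mul_self_pos.2 h1, sq_nonneg (w 0)]
    · nlinarith [mul_self_pos.2 h, sq_nonneg (w 1)]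
  set e : (Fin 2 → ℝ) → (ℝ × ℝ) := fun x => (φ x, x 0 * w 0 + x 1 * w 1) with he
  have headd : ∀ x y, e (x + y) = e x + e y := by
    intro x y
    simp only [he, hφ, Pi.add_apply, Prod.mk_add_mk, Prod.mk.injEq]
    constructor <;> ring
  have hinj : Function.Injective e := by
    intro x y hxy
    have h1 : φ x = φ y := congrArg Prod.fst hxy
    have h2 : x 0 * w 0 + x 1 * w 1 = y 0 * w 0 + y 1 * w 1 := congrArg Prod.snd hxy
    simp only [hφ] at h1
    have hx0 : x 0 = y 0 := by
      have key : (x 0 - y 0) * (w 0 ^ 2 + w 1 ^ 2) = 0 := by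
        linear_combination w 0 * h2 + w 1 * h1
      rcases mul_eq_zero.1 key with h | h
      · linarith
      · exact absurd h (ne_of_gt hw2)
    have hx1 : x 1 = y 1 := by
      have key : (x 1 - y 1) * (w 0 ^ 2 + w 1 ^ 2) = 0 := by
        linear_combination w 1 * h2 - w 0 * h1
      rcases mul_eq_zero.1 key with h | h
      · linarith
      · exact absurd h (ne_of_gt hw2)
    funext j; fin_cases j
    · exact hx0
    · exact hx1
  have hker : ∀ u : Fin 2 → ℝ, φ u = 0 → ∃ t : ℝ, u = t • w := by
    intro u hu
    simp only [hφ] at hu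
    by_cases hcase : w 0 = 0
    · have hw1 : w 1 ≠ 0 := by
        intro h1; apply hw0; funext j; fin_cases j <;> simp [hcase, h1]
      refine ⟨u 1 / w 1, funext fun j => ?_⟩
      fin_cases j
      · show u 0 = u 1 / w 1 * w 0
        have h3 : u 0 * w 1 = 0 := by linear_combination hu + u 1 * hcase
        rcases mul_eq_zero.1 h3 with h | h
        · rw [h, hcase]; ring
        · exact absurd h hw1
      · show u 1 = u 1 / w 1 * w 1
        field_simp
    · refine ⟨u 0 / w 0, funext fun j => ?_⟩
      fin_cases j
      · show u 0 = u 0 / w 0 * w 0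
        field_simp
      · show u 1 = u 0 / w 0 * w 1
        field_simp
        linear_combination -hu
  have hre : ∀ i, ((A i).image φ).card = r i := by
    intro i
    refine le_antisymm ?_ ?_
    · obtain ⟨c, hc⟩ := (hr i).1
      have hsub : (A i).image φ ⊆
          (Finset.univ : Finset (Fin (r i))).image (fun j => φ (c j) + φ a) := by
        intro v hv
        obtain ⟨x, hx, rfl⟩ := Finset.mem_image.1 hv
        have hxl := hc (Finset.mem_coe.2 hx)
        obtain ⟨j, hj⟩ := Set.mem_iUnion.1 hxl
        obtain ⟨z, hz, hzx⟩ := Set.mem_vadd_set.1 hj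
        obtain ⟨t, rfl⟩ := hz
        refine Finset.mem_image.2 ⟨j, Finset.mem_univ _, ?_⟩
        rw [← hzx]
        show φ (c j) + φ a = φ (c j +ᵥ (a + t • w))
        simp only [vadd_eq_add, hφ, Pi.add_apply, Pi.smul_apply, smul_eq_mul]
        ring
      calc ((A i).image φ).card
          ≤ ((Finset.univ : Finset (Fin (r i))).image (fun j => φ (c j) + φ a)).card :=
            Finset.card_le_card hsub
        _ ≤ (Finset.univ : Finset (Fin (r i))).card := Finset.card_image_le
        _ = r i := by simp
    · refine (hr i).2 ?_
      have hsel : ∀ v ∈ (A i).image φ, ∃ x, x ∈ A i ∧ φ x = v := by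
        intro v hv; obtain ⟨x, hx, hxv⟩ := Finset.mem_image.1 hv; exact ⟨x, hx, hxv⟩
      choose sel hsel1 hsel2 using hsel
      set sel' : ℝ → (Fin 2 → ℝ) :=
        fun v => if h : v ∈ (A i).image φ then sel v h else 0 with hsel'
      have hselφ : ∀ v ∈ (A i).image φ, φ (sel' v) = v := by
        intro v hv
        simp only [hsel', dif_pos hv]
        exact hsel2 v hv
      refine ⟨fun j => sel' (((A i).image φ).equivFin.symm j).1 - a, ?_⟩
      intro x hx
      have hx' : x ∈ A i := Finset.mem_coe.1 hx
      have hv : φ x ∈ (A i).image φ := Finset.mem_image_of_mem _ hx'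
      rw [Set.mem_iUnion]
      refine ⟨((A i).image φ).equivFin ⟨φ x, hv⟩, ?_⟩
      have hφ0 : φ (x - sel' (φ x)) = 0 := by
        have h1 : φ (sel' (φ x)) = φ x := hselφ _ hv
        simp only [hφ, Pi.sub_apply] at h1 ⊢
        linear_combination -h1
      obtain ⟨t, ht⟩ := hker _ hφ0
      have hsymm2 : ((((A i).image φ).equivFin.symm)
          (((A i).image φ).equivFin ⟨φ x, hv⟩) : ℝ) = φ x := by
        rw [Equiv.symm_apply_apply]
      simp only [hsymm2]
      rw [Set.mem_vadd_set]
      refine ⟨a + t • w, ⟨t, rfl⟩, ?_⟩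
      show (sel' (φ x) - a) + (a + t • w) = x
      rw [← ht]
      abel
  set Bf : Fin (m + 1) → Finset (ℝ × ℝ) := fun i => (A i).image e with hBf
  have hBfne : ∀ i, (Bf i).Nonempty := fun i => (hA i).image _
  have hcore := coreGS m (∑ i, ((Bf i).image Prod.fst).card) Bf hBfne rfl
  have hfsti : ∀ i, (Bf i).image Prod.fst = (A i).image φ := by
    intro i
    simp only [hBf]
    rw [Finset.image_image]
    rfl
  have hci : ∀ i, (Bf i).card = (A i).card := fun i =>
    Finset.card_image_of_injective _ hinj
  have hesum : (∑ i, Bf i) = (∑ i, A i).image e := by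
    simp only [hBf]
    exact (imageFinsetSumGS Finset.univ A (AddMonoidHom.mk' e headd)).symm
  have hcsum : (∑ i, Bf i).card = (∑ i, A i).card := by
    rw [hesum]; exact Finset.card_image_of_injective _ hinj
  simp only [hfsti, hre, hci, hcsum] at hcore
  push_cast at hcore ⊢
  rw [show ((m : ℝ) + 1) - 1 = (m : ℝ) from by ring]
  exact hcore
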